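/- Let K be an algebraically closed field and a(T₁,T₂), b(T₁,T₂) ∈ K[T₁,T₂] homogeneous of the same degree d₀ with no common factors, so a and b have no common zero in P¹. Let F₁, F₂ ∈ K[X₁,X₂,X₃] be homogeneous of degree 2 with no common factor. Then the polynomial b(F₁(X),F₂(X))·X₁ − a(F₁(X),F₂(X))·X₂ is not identically zero. -/

import Mathlib

open MvPolynomial

private lemma aux_not_unit {n : ℕ} {K : Type*} [Field K]
    {p : MvPolynomial (Fin n) K} (h : constantCoeff p = 0) : ¬ IsUnit p := by
  intro hu
  have := hu.map (constantCoeff : MvPolynomial (Fin n) K →+* K)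
  rw [h] at this
  exact not_isUnit_zero this

private lemma aux_constantCoeff {n d : ℕ} {K : Type*} [Field K]
    {p : MvPolynomial (Fin n) K} (hp : p.IsHomogeneous d) (hd : d ≠ 0) :
    constantCoeff p = 0 := by
  have := hp.coeff_eq_zero (d := 0) (by simpa using (Ne.symm hd))
  simpa [constantCoeff_eq] using this

private lemma aux_scaling {K S : Type*} [Field K] [CommRing S]
    {p : MvPolynomial (Fin 2) K} {d : ℕ} (hp : p.IsHomogeneous d)
    (f : K →+* S) (s : S) (y : Fin 2 → S) :
    eval₂ f (fun i => s * y i) p = s ^ d * eval₂ f y p := by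
  rw [eval₂_eq', eval₂_eq', Finset.mul_sum]
  refine Finset.sum_congr rfl fun m hm => ?_
  have hdeg : ∑ i, m i = d := by
    have h1 : m.degree = d := by
      by_contra hne
      exact (mem_support_iff.mp hm) (hp.coeff_eq_zero hne)
    rw [← h1, Finsupp.degree]
    exact (Finset.sum_subset (Finset.subset_univ _)
      fun i _ hi => Finsupp.notMem_support_iff.mp hi).symm
  calc f (coeff m p) * ∏ i, (s * y i) ^ m i
      = f (coeff m p) * ((∏ i, s ^ m i) * ∏ i, y i ^ m i) := by
        rw [← Finset.prod_mul_distrib]; simp [mul_pow]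
    _ = s ^ d * (f (coeff m p) * ∏ i, y i ^ m i) := by
        rw [Finset.prod_pow_eq_pow_sum, hdeg]; ring

private lemma aux_eval₂_C {K : Type*} [Field K] (v : Fin 2 → K)
    (p : MvPolynomial (Fin 2) K) :
    eval₂ (C : K →+* MvPolynomial (Fin 1) K) (fun i => C (v i)) p = C (eval v p) := by
  rw [← eval₂_id (g := v) p, eval₂_comp_left C (RingHom.id K) v p]
  rfl

private lemma aux_finSuccEquiv_C {K : Type*} [Field K] (x : K) :
    finSuccEquiv K 1 (C x) = Polynomial.C (C x) := by
  simp [finSuccEquiv_apply]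

private lemma aux_linear_dvd {K : Type*} [Field K] {p : MvPolynomial (Fin 2) K} {d : ℕ}
    (hp : p.IsHomogeneous d) {α β : K} (hβ : β ≠ 0) (hz : eval ![α, β] p = 0) :
    (X 0 - C (α * β⁻¹) * X 1) ∣ p := by
  set c := α * β⁻¹ with hc
  have h1 : eval ![c, 1] p = 0 := by
    have h2 : eval ![α, β] p = β ^ d * eval ![c, 1] p := by
      have h3 := aux_scaling hp (RingHom.id K) β ![c, 1]
      rw [eval₂_id, eval₂_id] at h3
      have harg : (![α, β] : Fin 2 → K) = fun i => β * ![c, 1] i := by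
        funext i
        fin_cases i
        · show α = β * c
          rw [hc, mul_comm α, ← mul_assoc, mul_inv_cancel₀ hβ, one_mul]
        · show β = β * 1
          ring
      rw [harg]
      exact h3
    rw [hz] at h2
    rcases mul_eq_zero.mp h2.symm with h | h
    · exact absurd h (pow_ne_zero _ hβ)
    · exact h
  have key : eval₂ (C : K →+* MvPolynomial (Fin 1) K)
      ![C c * X 0, X 0] p = 0 := by
    have h4 := aux_scaling hp (C : K →+* MvPolynomial (Fin 1) K) (X 0) ![C c, 1]
    have h5 : (fun i => (X 0 : MvPolynomial (Fin 1) K) * ![C c, 1] i)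
        = ![C c * X 0, X 0] := by
      funext i; fin_cases i <;> simp [mul_comm]
    rw [h5] at h4
    have h6 : eval₂ (C : K →+* MvPolynomial (Fin 1) K) ![C c, 1] p = C (eval ![c, 1] p) := by
      rw [← aux_eval₂_C ![c, 1] p]
      congr 1
      funext i; fin_cases i <;> simp
    rw [h4, h6, h1, map_zero, mul_zero]
  set e := finSuccEquiv K 1 with he
  have hroot : Polynomial.IsRoot (e p) (C c * X 0) := by
    show Polynomial.eval _ _ = 0
    rw [he, finSuccEquiv_apply]
    show Polynomial.evalRingHom (C c * X 0) (eval₂ _ _ p) = 0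
    rw [eval₂_comp_left (Polynomial.evalRingHom (C c * X 0))]
    rw [← key]
    congr 1
    · ext x
      simp
    · funext i
      fin_cases i
      · simp
      · show Polynomial.eval _ (Fin.cases Polynomial.X _ (1 : Fin 2)) = _
        rw [show (1 : Fin 2) = Fin.succ 0 from rfl, Fin.cases_succ]
        simp
  have hdvd : (Polynomial.X - Polynomial.C (C c * X 0)) ∣ e p :=
    Polynomial.dvd_iff_isRoot.mpr hroot
  obtain ⟨q, hq⟩ := hdvd
  refine ⟨e.symm q, ?_⟩
  apply e.injective
  rw [map_mul, AlgEquiv.apply_symm_apply, hq]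
  congr 1
  symm
  rw [map_sub, map_mul, he, finSuccEquiv_X_zero, aux_finSuccEquiv_C,
    show (1 : Fin 2) = Fin.succ 0 from rfl, finSuccEquiv_X_succ]
  rw [← Polynomial.C_mul]

private lemma aux_no_common_zero {K : Type*} [Field K] {d : ℕ}
    {a b : MvPolynomial (Fin 2) K} (ha : a.IsHomogeneous d) (hb : b.IsHomogeneous d)
    (hab : IsRelPrime a b) {α β : K} (hne : ¬(α = 0 ∧ β = 0))
    (hza : eval ![α, β] a = 0) (hzb : eval ![α, β] b = 0) : False := by
  by_cases hβ : β ≠ 0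
  · have hu := hab (aux_linear_dvd ha hβ hza) (aux_linear_dvd hb hβ hzb)
    refine aux_not_unit ?_ hu
    simp
  · push_neg at hβ
    subst hβ
    have hα : α ≠ 0 := fun h => hne ⟨h, rfl⟩
    set sw : Fin 2 → Fin 2 := ⇑(Equiv.swap (0 : Fin 2) 1) with hsw
    have hswsw : ∀ p : MvPolynomial (Fin 2) K, rename sw (rename sw p) = p := by
      intro p
      rw [rename_rename]
      rw [show (sw ∘ sw) = id by funext i; simp [hsw, Equiv.swap_apply_self]]
      exact rename_id_apply p
    have hswap_eval : ∀ p : MvPolynomial (Fin 2) K, eval ![(0:K), α] (rename sw p)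
        = eval ![α, 0] p := by
      intro p
      rw [eval_rename]
      have : (![(0:K), α] ∘ sw) = ![α, 0] := by
        funext i
        fin_cases i <;> simp [hsw]
      rw [this]
    have hza' : eval ![(0:K), α] (rename sw a) = 0 := by rw [hswap_eval]; exact hza
    have hzb' : eval ![(0:K), α] (rename sw b) = 0 := by rw [hswap_eval]; exact hzb
    have hda := aux_linear_dvd (ha.rename_isHomogeneous (f := sw)) hα hza'
    have hdb := aux_linear_dvd (hb.rename_isHomogeneous (f := sw)) hα hzb'
    obtain ⟨qa, hqa⟩ := hda
    obtain ⟨qb, hqb⟩ := hdb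
    set D := rename sw (X 0 - C (0 * α⁻¹) * X 1) with hD
    have hDa : D ∣ a := by
      refine ⟨rename sw qa, ?_⟩
      rw [hD, ← map_mul, ← hqa, hswsw]
    have hDb : D ∣ b := by
      refine ⟨rename sw qb, ?_⟩
      rw [hD, ← map_mul, ← hqb, hswsw]
    have hu := hab hDa hDb
    refine aux_not_unit ?_ hu
    rw [hD]
    simp

private lemma aux_var_pow_mem {K : Type*} [Field K] [IsAlgClosed K] {d : ℕ}
    {a b : MvPolynomial (Fin 2) K} (ha : a.IsHomogeneous d) (hb : b.IsHomogeneous d)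
    (hab : IsRelPrime a b) (i : Fin 2) :
    ∃ (k : ℕ) (u v : MvPolynomial (Fin 2) K), u * a + v * b = X i ^ k := by
  have hmem : (X i : MvPolynomial (Fin 2) K) ∈
      vanishingIdeal K (zeroLocus K (Ideal.span {a, b})) := by
    rw [mem_vanishingIdeal_iff]
    intro x hx
    have hxa : eval x a = 0 := hx a (Ideal.subset_span (by simp))
    have hxb : eval x b = 0 := hx b (Ideal.subset_span (by simp))
    have hxx : (![x 0, x 1] : Fin 2 → K) = x := by
      funext j; fin_cases j <;> rfl
    have hz : x 0 = 0 ∧ x 1 = 0 := by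
      by_contra hc
      exact aux_no_common_zero ha hb hab hc (by rw [hxx]; exact hxa) (by rw [hxx]; exact hxb)
    fin_cases i
    · simpa using hz.1
    · simpa using hz.2
  rw [vanishingIdeal_zeroLocus_eq_radical] at hmem
  obtain ⟨k, hk⟩ := hmem
  obtain ⟨u, v, huv⟩ := Ideal.mem_span_pair.mp hk
  exact ⟨k, u, v, huv⟩

private lemma aux_prime_X0 {K : Type*} [Field K] {n : ℕ} :
    Prime (X 0 : MvPolynomial (Fin (n + 1)) K) := by
  apply (MulEquiv.prime_iff
    ((finSuccEquiv K n).toRingEquiv.toMulEquiv :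
      MvPolynomial (Fin (n + 1)) K ≃* Polynomial (MvPolynomial (Fin n) K))).mp
  show Prime (finSuccEquiv K n (X 0))
  rw [finSuccEquiv_X_zero]
  exact Polynomial.prime_X

private lemma aux_prime_X1 {K : Type*} [Field K] :
    Prime (X 1 : MvPolynomial (Fin 3) K) := by
  apply (MulEquiv.prime_iff
    ((renameEquiv K (Equiv.swap (0 : Fin 3) 1)).toRingEquiv.toMulEquiv :
      MvPolynomial (Fin 3) K ≃* MvPolynomial (Fin 3) K)).mp
  show Prime (renameEquiv K (Equiv.swap (0 : Fin 3) 1) (X 1))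
  rw [renameEquiv_apply, rename_X, Equiv.swap_apply_right]
  exact aux_prime_X0

private lemma aux_rename_succ {K : Type*} [Field K] {n : ℕ} (r : MvPolynomial (Fin n) K) :
    finSuccEquiv K n (rename Fin.succ r) = Polynomial.C r := by
  induction r using MvPolynomial.induction_on with
  | C x => rw [rename_C]; simp [finSuccEquiv_apply]
  | add p q hp hq => rw [map_add, map_add, hp, hq, map_add]
  | mul_X p j hp => rw [map_mul, rename_X, map_mul, hp, finSuccEquiv_X_succ, Polynomial.C_mul]

private lemma aux_unit_totalDegree {K : Type*} [Field K] :
    ∀ {n : ℕ} {p : MvPolynomial (Fin n) K}, IsUnit p → p.totalDegree = 0 := by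
  intro n
  induction n with
  | zero =>
    intro p _
    rw [p.eq_C_of_isEmpty]
    exact totalDegree_C _
  | succ n ih =>
    intro p hp
    have hu : IsUnit (finSuccEquiv K n p) := hp.map (finSuccEquiv K n)
    obtain ⟨r, hr, hCr⟩ := Polynomial.isUnit_iff.mp hu
    have hpr : p = rename Fin.succ r := by
      apply (finSuccEquiv K n).injective
      rw [aux_rename_succ, hCr]
    rw [hpr]
    have h1 := totalDegree_rename_le (Fin.succ) r
    have h0 := ih hr
    omega

/-- If `a, b ∈ K[T₁,T₂]` are homogeneous of the same degree `d₀ > 1` with no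
common factor, and `F₁, F₂ ∈ K[X₁,X₂,X₃]` are homogeneous of degree `2` with
no common factor, then `b(F₁(X),F₂(X))X₁ − a(F₁(X),F₂(X))X₂` is not
identically zero. -/
theorem stmt_3 (K : Type*) [Field K] [IsAlgClosed K] (d₀ : ℕ) (hd₀ : 1 < d₀)
    (a b : MvPolynomial (Fin 2) K)
    (ha : a.IsHomogeneous d₀) (hb : b.IsHomogeneous d₀) (hab : IsRelPrime a b)
    (F₁ F₂ : MvPolynomial (Fin 3) K)
    (hF₁ : F₁.IsHomogeneous 2) (hF₂ : F₂.IsHomogeneous 2)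
    (hF : IsRelPrime F₁ F₂) :
    aeval ![F₁, F₂] b * X 0 - aeval ![F₁, F₂] a * X 1 ≠ 0 := by
  intro h
  rw [sub_eq_zero] at h
  set ψ := (aeval ![F₁, F₂] : MvPolynomial (Fin 2) K →ₐ[K] MvPolynomial (Fin 3) K) with hψ
  set A := ψ a with hAdef
  set B := ψ b with hBdef
  -- F₁ ≠ 0
  have hF₁0 : F₁ ≠ 0 := by
    rintro rfl
    exact aux_not_unit (aux_constantCoeff hF₂ (by norm_num))
      (hF (dvd_zero F₂) dvd_rfl)
  -- nullstellensatz-based Bezout identities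
  obtain ⟨k, u, v, huv⟩ := aux_var_pow_mem ha hb hab 0
  obtain ⟨m, u', v', huv'⟩ := aux_var_pow_mem ha hb hab 1
  have hXF1 : ψ (X 0) = F₁ := by rw [hψ]; simp
  have hXF2 : ψ (X 1) = F₂ := by rw [hψ]; simp
  have hψ1 : ψ u * A + ψ v * B = F₁ ^ k := by
    have h5 := congrArg ψ huv
    rw [map_add, map_mul, map_mul, map_pow, hXF1] at h5
    exact h5
  have hψ2 : ψ u' * A + ψ v' * B = F₂ ^ m := by
    have h5 := congrArg ψ huv'
    rw [map_add, map_mul, map_mul, map_pow, hXF2] at h5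
    exact h5
  -- A ≠ 0
  have hA0 : A ≠ 0 := by
    intro hA0
    have hB0 : B = 0 := by
      rcases mul_eq_zero.mp (by rw [h, hA0, zero_mul] : B * X 0 = 0) with h' | h'
      · exact h'
      · exact absurd h' (X_ne_zero 0)
    rw [hA0, hB0, mul_zero, mul_zero, add_zero] at hψ1
    exact pow_ne_zero k hF₁0 hψ1.symm
  -- X 0 ∣ A
  have hX0A : (X 0 : MvPolynomial (Fin 3) K) ∣ A := by
    rcases (aux_prime_X0 (n := 2)).2.2 A (X 1) ⟨B, by rw [← h]; ring⟩ with h' | h'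
    · exact h'
    · exfalso
      obtain ⟨q, hq⟩ := h'
      have := congrArg (eval (![0, 1, 0] : Fin 3 → K)) hq
      simp at this
  -- X 1 ∣ B
  have hX1B : (X 1 : MvPolynomial (Fin 3) K) ∣ B := by
    rcases aux_prime_X1.2.2 B (X 0) ⟨A, by rw [h]; ring⟩ with h' | h'
    · exact h'
    · exfalso
      obtain ⟨q, hq⟩ := h'
      have := congrArg (eval (![1, 0, 0] : Fin 3 → K)) hq
      simp at this
  obtain ⟨A', hA'⟩ := hX0A
  obtain ⟨B', hB'⟩ := hX1B
  have hcc : A' = B' := by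
    have hne : (X 0 : MvPolynomial (Fin 3) K) * X 1 ≠ 0 :=
      mul_ne_zero (X_ne_zero 0) (X_ne_zero 1)
    apply mul_left_cancel₀ hne
    linear_combination X 0 * hB' - X 1 * hA' - h
  have hCA : A' ∣ A := ⟨X 0, by rw [hA']; ring⟩
  have hCB : A' ∣ B := ⟨X 1, by rw [hB', hcc]; ring⟩
  have hC1 : A' ∣ F₁ ^ k := by
    rw [← hψ1]
    exact dvd_add (hCA.mul_left _) (hCB.mul_left _)
  have hC2 : A' ∣ F₂ ^ m := by
    rw [← hψ2]
    exact dvd_add (hCA.mul_left _) (hCB.mul_left _)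
  have hunit : IsUnit A' := (hF.pow (m := k) (n := m)) hC1 hC2
  have hA : A.IsHomogeneous (2 * d₀) := by
    refine ha.aeval ![F₁, F₂] fun i => ?_
    fin_cases i <;> assumption
  have hdeg : A.totalDegree = 2 * d₀ := hA.totalDegree hA0
  have hle : A.totalDegree ≤ 1 := by
    rw [hA']
    refine (totalDegree_mul _ _).trans ?_
    rw [totalDegree_X, aux_unit_totalDegree hunit]
  omega
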